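/- Every connected chordal graph that is not a complete graph has a clique cutset. -/

import Mathlib

open SimpleGraph Walk

open SimpleGraph Walk

namespace CliqueCutsetProof

variable {V : Type*} {G : SimpleGraph V}

/-- Reachability avoiding a set `S`. -/
def Reach (G : SimpleGraph V) (S : Set V) (x y : V) : Prop :=
  ∃ p : G.Walk x y, ∀ v ∈ p.support, v ∉ S

lemma Reach.symm {S : Set V} {x y : V} (h : Reach G S x y) : Reach G S y x := by
  obtain ⟨p, hp⟩ := h
  exact ⟨p.reverse, fun v hv => hp v (by simpa [Walk.support_reverse] using hv)⟩

lemma Reach.trans {S : Set V} {x y z : V} (h : Reach G S x y) (h' : Reach G S y z) :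
    Reach G S x z := by
  obtain ⟨p, hp⟩ := h
  obtain ⟨q, hq⟩ := h'
  refine ⟨p.append q, fun v hv => ?_⟩
  rw [Walk.support_append, List.mem_append] at hv
  rcases hv with h | h
  · exact hp v h
  · exact hq v (List.mem_of_mem_tail h)

lemma Reach.of_mem_support {S : Set V} {x y : V} (p : G.Walk x y)
    (hp : ∀ v ∈ p.support, v ∉ S) {v : V} (hv : v ∈ p.support) : Reach G S x v := by
  classical
  exact ⟨p.takeUntil v hv, fun w hw => hp w (p.support_takeUntil_subset hv hw)⟩

lemma Reach.adj {S : Set V} {x y : V} (h : G.Adj x y) (hx : x ∉ S) (hy : y ∉ S) :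
    Reach G S x y := by
  refine ⟨Walk.cons h Walk.nil, ?_⟩
  intro v hv
  simp only [Walk.support_cons, Walk.support_nil, List.mem_cons, List.mem_singleton,
    List.not_mem_nil, or_false] at hv
  rcases hv with rfl | rfl
  · exact hx
  · exact hy

section TakeDrop

lemma getVert_copy' {u v u' v' : V} (p : G.Walk u v) (hu : u = u') (hv : v = v') (i : ℕ) :
    (p.copy hu hv).getVert i = p.getVert i := by
  subst hu; subst hv; rfl

lemma getVert_nil' {u : V} (i : ℕ) : (Walk.nil : G.Walk u u).getVert i = u := by
  cases i <;> rfl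

/-- The walk consisting of the first `n` darts of a walk. -/
def wtake {u v : V} : ∀ (p : G.Walk u v) (n : ℕ), G.Walk u (p.getVert n)
  | p, 0 => Walk.nil.copy rfl (p.getVert_zero).symm
  | Walk.nil, _ + 1 => Walk.nil
  | Walk.cons h q, n + 1 => Walk.cons h (wtake q n)

lemma length_wtake {u v : V} (p : G.Walk u v) (n : ℕ) :
    (wtake p n).length = min n p.length := by
  induction p generalizing n with
  | nil => cases n <;> simp [wtake]
  | cons h q ih =>
    cases n with
    | zero => simp [wtake]
    | succ n => simp [wtake, ih]

lemma getVert_wtake {u v : V} (p : G.Walk u v) {n i : ℕ} (h : i ≤ n) :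
    (wtake p n).getVert i = p.getVert i := by
  induction p generalizing n i with
  | nil =>
    cases n with
    | zero => simp [wtake, getVert_copy']
    | succ n => simp [wtake, getVert_nil']
  | cons hadj q ih =>
    cases n with
    | zero =>
      have : i = 0 := by omega
      subst this
      simp [wtake, getVert_copy']
    | succ n =>
      cases i with
      | zero => simp [wtake]
      | succ i =>
        simp only [wtake, Walk.getVert_cons_succ]
        exact ih (by omega)

lemma support_wtake_subset {u v : V} (p : G.Walk u v) (n : ℕ) :
    (wtake p n).support ⊆ p.support := by
  induction p generalizing n with
  | nil => cases n <;> simp [wtake]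
  | cons hadj q ih =>
    cases n with
    | zero => intro x hx; simp [wtake] at hx; simp [hx]
    | succ n =>
      intro x hx
      simp only [wtake, Walk.support_cons, List.mem_cons] at hx ⊢
      have hx' : x ∈ (_ : V) :: (wtake q n).support := hx
      rcases List.mem_cons.mp hx' with rfl | hx
      · exact Or.inl rfl
      · exact Or.inr (ih n hx)

/-- The walk obtained by removing the first `n` darts. -/
def wdrop {u v : V} : ∀ (p : G.Walk u v) (n : ℕ), G.Walk (p.getVert n) v
  | p, 0 => p.copy (p.getVert_zero).symm rfl
  | Walk.nil, _ + 1 => Walk.nil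
  | Walk.cons _ q, n + 1 => wdrop q n

lemma length_wdrop {u v : V} (p : G.Walk u v) (n : ℕ) :
    (wdrop p n).length = p.length - n := by
  induction p generalizing n with
  | nil => cases n <;> simp [wdrop, getVert_nil']
  | cons hadj q ih =>
    cases n with
    | zero => simp [wdrop]
    | succ n => simp [wdrop, ih]

lemma getVert_wdrop {u v : V} (p : G.Walk u v) (n i : ℕ) :
    (wdrop p n).getVert i = p.getVert (n + i) := by
  induction p generalizing n i with
  | nil =>
    cases n with
    | zero => simp [wdrop, getVert_copy']
    | succ n => exact (getVert_nil' i).trans (getVert_nil' (n + 1 + i)).symm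
  | cons hadj q ih =>
    cases n with
    | zero => simp [wdrop, getVert_copy']
    | succ n =>
      simp only [wdrop]
      rw [show n + 1 + i = (n + i) + 1 by omega]
      exact (ih n i).trans (by rw [Walk.getVert_cons_succ])

lemma support_wdrop_subset {u v : V} (p : G.Walk u v) (n : ℕ) :
    (wdrop p n).support ⊆ p.support := by
  induction p generalizing n with
  | nil => cases n <;> simp [wdrop, getVert_nil']
  | cons hadj q ih =>
    cases n with
    | zero => simp [wdrop]
    | succ n =>
      intro x hx
      simp only [wdrop] at hx
      simp only [Walk.support_cons, List.mem_cons]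
      exact Or.inr (ih n hx)

end TakeDrop

lemma IsPath.getVert_inj {u v : V} {p : G.Walk u v} (hp : p.IsPath) {i j : ℕ}
    (hi : i ≤ p.length) (hj : j ≤ p.length) (h : p.getVert i = p.getVert j) : i = j := by
  induction p generalizing i j with
  | nil => simp only [Walk.length_nil, Nat.le_zero] at hi hj; omega
  | cons hadj q ih =>
    rw [Walk.cons_isPath_iff] at hp
    cases i with
    | zero =>
      cases j with
      | zero => rfl
      | succ j =>
        exfalso
        apply hp.2
        rw [Walk.mem_support_iff_exists_getVert]
        exact ⟨j, by simpa using h.symm, by simpa using hj⟩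
    | succ i =>
      cases j with
      | zero =>
        exfalso
        apply hp.2
        rw [Walk.mem_support_iff_exists_getVert]
        exact ⟨i, by simpa using h, by simpa using hi⟩
      | succ j =>
        have := ih hp.1 (by simpa using hi) (by simpa using hj) (by simpa using h)
        omega

lemma exists_shorter {x y : V} (P : G.Walk x y) {i j : ℕ} (hij : i + 1 < j)
    (hj : j ≤ P.length) (hadj : G.Adj (P.getVert i) (P.getVert j)) :
    ∃ W : G.Walk x y, W.length < P.length ∧ ∀ v ∈ W.support, v ∈ P.support := by
  refine ⟨(wtake P i).append (Walk.cons hadj (wdrop P j)), ?_, ?_⟩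
  · rw [Walk.length_append, length_wtake, Walk.length_cons, length_wdrop]
    omega
  · intro v hv
    rw [Walk.support_append, List.mem_append] at hv
    rcases hv with hv | hv
    · exact support_wtake_subset P i hv
    · rw [Walk.support_cons, List.tail_cons] at hv
      exact support_wdrop_subset P j hv

lemma exists_min_path (T : Set V) (x y : V) (hne : x ≠ y) (hna : ¬ G.Adj x y)
    (hex : ∃ W : G.Walk x y, ∀ v ∈ W.support, v = x ∨ v = y ∨ v ∈ T) :
    ∃ P : G.Walk x y, P.IsPath ∧ (∀ v ∈ P.support, v = x ∨ v = y ∨ v ∈ T) ∧ 2 ≤ P.length ∧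
      ∀ i j, i + 1 < j → j ≤ P.length → ¬ G.Adj (P.getVert i) (P.getVert j) := by
  classical
  have hex' : ∃ n, ∃ W : G.Walk x y,
      (∀ v ∈ W.support, v = x ∨ v = y ∨ v ∈ T) ∧ W.length = n := by
    obtain ⟨W, hW⟩ := hex
    exact ⟨W.length, W, hW, rfl⟩
  obtain ⟨W, hQ, hlen⟩ := Nat.find_spec hex'
  set n₀ := Nat.find hex' with hn₀
  set P := W.bypass with hP
  have hQP : ∀ v ∈ P.support, v = x ∨ v = y ∨ v ∈ T :=
    fun v hv => hQ v (W.support_bypass_subset hv)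
  have hPlen : P.length = n₀ := by
    have h1 : P.length ≤ n₀ := hlen ▸ W.length_bypass_le
    have h2 : n₀ ≤ P.length := Nat.find_le ⟨P, hQP, rfl⟩
    omega
  have hmin : ∀ W' : G.Walk x y, (∀ v ∈ W'.support, v = x ∨ v = y ∨ v ∈ T) →
      P.length ≤ W'.length := by
    intro W' hW'
    rw [hPlen]
    exact Nat.find_le ⟨W', hW', rfl⟩
  refine ⟨P, W.bypass_isPath, hQP, ?_, ?_⟩
  · by_contra h
    push_neg at h
    interval_cases hPl : P.length
    · exact hne (Walk.eq_of_length_eq_zero hPl)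
    · apply hna
      have := P.adj_getVert_succ (i := 0) (by omega)
      rw [Walk.getVert_zero, show (0 + 1 : ℕ) = P.length by omega, Walk.getVert_length] at this
      exact this
  · intro i j hij hj hadj
    obtain ⟨W', hlt, hsub⟩ := exists_shorter P hij hj hadj
    have := hmin W' (fun v hv => hQP v (hsub v hv))
    omega

lemma cycle_embedding (n : ℕ) (hn : 4 ≤ n) (f : ℕ → V)
    (hinj : ∀ i j, i < n → j < n → f i = f j → i = j)
    (hadj : ∀ i j, i < j → j < n →
      (G.Adj (f i) (f j) ↔ (j = i + 1 ∨ (i = 0 ∧ j = n - 1)))) :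
    Nonempty (cycleGraph n ↪g G) := by
  have key : ∀ u v : Fin n, u.val < v.val →
      ((cycleGraph n).Adj u v ↔ (v.val = u.val + 1 ∨ (u.val = 0 ∧ v.val = n - 1))) := by
    intro u v huv
    rw [cycleGraph_adj']
    have hu := u.isLt
    have hv := v.isLt
    have h1 : (v - u).val = v.val - u.val := by
      rw [Fin.sub_def]
      simp only
      have : (n - u.val + v.val) = n + (v.val - u.val) := by omega
      rw [this, Nat.add_mod_left, Nat.mod_eq_of_lt (by omega)]
    have h2 : (u - v).val = n - v.val + u.val := by
      rw [Fin.sub_def]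
      simp only
      exact Nat.mod_eq_of_lt (by omega)
    rw [h1, h2]
    omega
  refine ⟨⟨⟨fun i => f i.val, ?_⟩, ?_⟩⟩
  · intro u v h
    exact Fin.ext (hinj u.val v.val u.isLt v.isLt h)
  · intro u v
    show G.Adj (f u.val) (f v.val) ↔ (cycleGraph n).Adj u v
    rcases lt_trichotomy u.val v.val with h | h | h
    · rw [hadj u.val v.val h v.isLt, key u v h]
    · have : u = v := Fin.ext h
      subst this
      simp only [G.irrefl, (cycleGraph n).irrefl]
    · rw [G.adj_comm, (cycleGraph n).adj_comm, hadj v.val u.val h u.isLt, key v u h]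

lemma key_nbr {S : Finset V} {c d s : V} (hc : c ∉ S) (hs : s ∈ S)
    (hnR : ¬ Reach G (↑S) c d) (W : G.Walk c d)
    (hW : ∀ v ∈ W.support, v ∈ S → v = s) :
    ∃ u, u ∉ (↑S : Set V) ∧ Reach G (↑S) c u ∧ G.Adj s u := by
  classical
  have hsW : s ∈ W.support := by
    by_contra hns
    refine hnR ⟨W, fun v hv hvS => hns ?_⟩
    rw [Finset.mem_coe] at hvS
    exact (hW v hv hvS) ▸ hv
  set T := W.takeUntil s hsW with hTdef
  have hcount : T.support.count s = 1 := W.count_support_takeUntil_eq_one hsW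
  have hsc : s ≠ c := fun h => hc (h ▸ hs)
  have hT1 : 1 ≤ T.length := by
    by_contra h
    have h0 : T.length = 0 := by omega
    exact hsc (Walk.eq_of_length_eq_zero h0).symm
  set u := T.getVert (T.length - 1) with hu
  have huT : u ∈ T.support :=
    Walk.mem_support_iff_exists_getVert.mpr ⟨T.length - 1, rfl, by omega⟩
  have hadj : G.Adj u s := by
    have h := T.adj_getVert_succ (i := T.length - 1) (by omega)
    rwa [show T.length - 1 + 1 = T.length by omega, T.getVert_length] at h
  have hus : u ≠ s := hadj.ne
  have hsTu : s ∉ (T.takeUntil u huT).support := by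
    intro hmem
    have hs2 : s ∈ (T.dropUntil u huT).support := Walk.end_mem_support _
    have heq : ((T.takeUntil u huT).append (T.dropUntil u huT)).support = T.support := by
      rw [Walk.take_spec]
    rw [← heq, Walk.support_append, List.count_append] at hcount
    have h1 : 1 ≤ ((T.takeUntil u huT).support).count s := List.count_pos_iff.mpr hmem
    have h2 : 1 ≤ ((T.dropUntil u huT).support.tail).count s := by
      apply List.count_pos_iff.mpr
      have := (T.dropUntil u huT).support_eq_cons
      rw [this, List.mem_cons] at hs2
      rcases hs2 with h | h
      · exact absurd h.symm hus
      · exact h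
    omega
  have hTsup : ∀ v ∈ (T.takeUntil u huT).support, v ∉ (↑S : Set V) := by
    intro v hv hvS
    have hvT : v ∈ T.support := T.support_takeUntil_subset huT hv
    have hvW : v ∈ W.support := W.support_takeUntil_subset hsW hvT
    exact hsTu ((hW v hvW (Finset.mem_coe.mp hvS)) ▸ hv)
  refine ⟨u, ?_, ⟨T.takeUntil u huT, hTsup⟩, hadj.symm⟩
  exact hTsup u (Walk.end_mem_support _)

end CliqueCutsetProof

open CliqueCutsetProof

/-- A graph has a clique cutset if there is a (possibly empty) clique `K` whose removal
disconnects the graph. -/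
def HasCliqueCutset {V : Type*} (G : SimpleGraph V) : Prop :=
  ∃ K : Set V, G.IsClique K ∧ ¬ (G.induce Kᶜ).Preconnected

/-- Every connected chordal graph (no induced cycle of length at least 4) that is not
complete has a clique cutset. -/
theorem chordal_not_complete_hasCliqueCutset {V : Type*} [Fintype V]
    (G : SimpleGraph V) (hconn : G.Connected)
    (hchordal : ∀ n, 4 ≤ n → IsEmpty (cycleGraph n ↪g G))
    (hnc : G ≠ ⊤) :
    HasCliqueCutset G := by
  classical
  obtain ⟨a, b, hab, hnadj⟩ : ∃ a b : V, a ≠ b ∧ ¬ G.Adj a b := by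
    by_contra h
    push_neg at h
    apply hnc
    ext u v
    simp only [top_adj]
    exact ⟨fun h' => h'.ne, fun hne => h u v hne⟩
  set P : Finset V → Prop := fun S => a ∉ S ∧ b ∉ S ∧ ¬ Reach G ↑S a b with hPdef
  have hFne : ∃ S : Finset V, P S := by
    refine ⟨({a, b} : Finset V)ᶜ, by simp [hPdef], by simp [hPdef], ?_⟩
    rintro ⟨p, hp⟩
    have hlen : 1 ≤ p.length := by
      by_contra h
      have h0 : p.length = 0 := by omega
      exact hab (Walk.eq_of_length_eq_zero h0)
    have h1 : p.getVert 1 ∈ p.support :=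
      Walk.mem_support_iff_exists_getVert.mpr ⟨1, rfl, hlen⟩
    have hadj1 : G.Adj a (p.getVert 1) := by
      have := p.adj_getVert_succ (i := 0) (by omega)
      rwa [Walk.getVert_zero] at this
    have hmem := hp _ h1
    simp only [Finset.coe_compl, Set.mem_compl_iff, Finset.mem_coe, Finset.mem_insert,
      Finset.mem_singleton, not_not] at hmem
    rcases hmem with h | h
    · rw [h] at hadj1; exact G.irrefl hadj1
    · rw [h] at hadj1; exact hnadj hadj1
  have hFne' : (Finset.univ.filter P).Nonempty := by
    obtain ⟨S, hS⟩ := hFne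
    exact ⟨S, Finset.mem_filter.mpr ⟨Finset.mem_univ _, hS⟩⟩
  obtain ⟨S, hSF, hminS⟩ := (Finset.univ.filter P).exists_min_image Finset.card hFne'
  rw [Finset.mem_filter] at hSF
  obtain ⟨-, haS, hbS, hnR⟩ := hSF
  set A : Set V := {v | v ∉ (↑S : Set V) ∧ Reach G ↑S a v} with hA
  set B : Set V := {v | v ∉ (↑S : Set V) ∧ Reach G ↑S b v} with hB
  have hABdisj : ∀ v, v ∈ A → v ∈ B → False := fun v hva hvb => hnR (hva.2.symm.symm.trans hvb.2.symm)
  have hAB : ∀ u ∈ A, ∀ w ∈ B, ¬ G.Adj u w := by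
    intro u hu w hw hadj
    exact hnR ((hu.2.trans (Reach.adj hadj hu.1 hw.1)).trans hw.2.symm)
  have key : ∀ s ∈ S, (∃ u ∈ A, G.Adj s u) ∧ (∃ w ∈ B, G.Adj s w) := by
    intro s hs
    have hcard : (S.erase s).card < S.card := Finset.card_erase_lt_of_mem hs
    have hPe : ¬ P (S.erase s) := by
      intro hPe
      have := hminS _ (Finset.mem_filter.mpr ⟨Finset.mem_univ _, hPe⟩)
      omega
    have hReach : Reach G ↑(S.erase s) a b := by
      by_contra h
      exact hPe ⟨fun ha => haS (Finset.mem_of_mem_erase ha),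
        fun hb => hbS (Finset.mem_of_mem_erase hb), h⟩
    obtain ⟨W, hW⟩ := hReach
    have hW' : ∀ v ∈ W.support, v ∈ S → v = s := by
      intro v hv hvS
      by_contra hvs
      apply hW v hv
      simp only [Finset.coe_erase, Set.mem_diff, Set.mem_singleton_iff]
      exact ⟨Finset.mem_coe.mpr hvS, hvs⟩
    constructor
    · obtain ⟨u, hu1, hu2, hu3⟩ := key_nbr haS hs hnR W hW'
      exact ⟨u, ⟨hu1, hu2⟩, hu3⟩
    · obtain ⟨w, hw1, hw2, hw3⟩ := key_nbr hbS hs (fun h => hnR h.symm) W.reverse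
        (fun v hv => hW' v (by rwa [Walk.support_reverse, List.mem_reverse] at hv))
      exact ⟨w, ⟨hw1, hw2⟩, hw3⟩
  have hclique : ∀ x ∈ S, ∀ y ∈ S, x ≠ y → G.Adj x y := by
    intro x hx y hy hxy
    by_contra hna
    obtain ⟨⟨u, hu, hxu⟩, ⟨w, hw, hxw⟩⟩ := key x hx
    obtain ⟨⟨u', hu', hyu'⟩, ⟨w', hw', hyw'⟩⟩ := key y hy
    have hexA : ∃ W : G.Walk x y, ∀ v ∈ W.support, v = x ∨ v = y ∨ v ∈ A := by
      obtain ⟨p, hp⟩ := hu.2.symm.trans hu'.2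
      refine ⟨Walk.cons hxu (p.append (Walk.cons hyu'.symm Walk.nil)), ?_⟩
      intro v hv
      rw [Walk.support_cons, List.mem_cons] at hv
      rcases hv with rfl | hv
      · exact Or.inl rfl
      rw [Walk.support_append, List.mem_append] at hv
      rcases hv with hv | hv
      · exact Or.inr (Or.inr ⟨hp v hv, hu.2.trans (Reach.of_mem_support p hp hv)⟩)
      · simp only [Walk.support_cons, Walk.support_nil, List.tail_cons,
          List.mem_singleton] at hv
        exact Or.inr (Or.inl hv)
    have hexB : ∃ W : G.Walk x y, ∀ v ∈ W.support, v = x ∨ v = y ∨ v ∈ B := by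
      obtain ⟨p, hp⟩ := hw.2.symm.trans hw'.2
      refine ⟨Walk.cons hxw (p.append (Walk.cons hyw'.symm Walk.nil)), ?_⟩
      intro v hv
      rw [Walk.support_cons, List.mem_cons] at hv
      rcases hv with rfl | hv
      · exact Or.inl rfl
      rw [Walk.support_append, List.mem_append] at hv
      rcases hv with hv | hv
      · exact Or.inr (Or.inr ⟨hp v hv, hw.2.trans (Reach.of_mem_support p hp hv)⟩)
      · simp only [Walk.support_cons, Walk.support_nil, List.tail_cons,
          List.mem_singleton] at hv
        exact Or.inr (Or.inl hv)
    obtain ⟨PA, hPAp, hQA, hPA2, chordA⟩ := exists_min_path A x y hxy hna hexA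
    obtain ⟨PB, hPBp, hQB, hPB2, chordB⟩ := exists_min_path B x y hxy hna hexB
    have hn4 : 4 ≤ PA.length + PB.length := by omega
    set f : ℕ → V := fun i => (PA.append PB.reverse).getVert i with hf
    have hfA : ∀ i, i ≤ PA.length → f i = PA.getVert i := by
      intro i hi
      show (PA.append PB.reverse).getVert i = _
      rw [Walk.getVert_append]
      split_ifs with h
      · rfl
      · have hieq : i = PA.length := by omega
        subst hieq
        rw [Nat.sub_self, Walk.getVert_zero, Walk.getVert_length]
    have hfB : ∀ i, PA.length ≤ i → i ≤ PA.length + PB.length →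
        f i = PB.getVert (PA.length + PB.length - i) := by
      intro i h1 h2
      show (PA.append PB.reverse).getVert i = _
      rw [Walk.getVert_append]
      split_ifs with h
      · exact absurd h (by omega)
      · rw [Walk.getVert_reverse]
        congr 1
        omega
    have hintA : ∀ k, 1 ≤ k → k ≤ PA.length - 1 → PA.getVert k ∈ A := by
      intro k h1 h2
      have hk : k ≤ PA.length := by omega
      have hmem : PA.getVert k ∈ PA.support :=
        Walk.mem_support_iff_exists_getVert.mpr ⟨k, rfl, hk⟩
      rcases hQA _ hmem with h | h | h
      · exfalso
        have h0 : PA.getVert k = PA.getVert 0 := by rw [h, Walk.getVert_zero]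
        have := IsPath.getVert_inj hPAp hk (by omega) h0
        omega
      · exfalso
        have h0 : PA.getVert k = PA.getVert PA.length := by rw [h, Walk.getVert_length]
        have := IsPath.getVert_inj hPAp hk le_rfl h0
        omega
      · exact h
    have hintB : ∀ k, 1 ≤ k → k ≤ PB.length - 1 → PB.getVert k ∈ B := by
      intro k h1 h2
      have hk : k ≤ PB.length := by omega
      have hmem : PB.getVert k ∈ PB.support :=
        Walk.mem_support_iff_exists_getVert.mpr ⟨k, rfl, hk⟩
      rcases hQB _ hmem with h | h | h
      · exfalso
        have h0 : PB.getVert k = PB.getVert 0 := by rw [h, Walk.getVert_zero]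
        have := IsPath.getVert_inj hPBp hk (by omega) h0
        omega
      · exfalso
        have h0 : PB.getVert k = PB.getVert PB.length := by rw [h, Walk.getVert_length]
        have := IsPath.getVert_inj hPBp hk le_rfl h0
        omega
      · exact h
    have hxS : x ∈ (↑S : Set V) := Finset.mem_coe.mpr hx
    have hone : ∀ i j, i ≤ j → j < PA.length + PB.length → f i = f j → i = j := by
      intro i j hij hj hfij
      by_cases hcase : j ≤ PA.length
      · rw [hfA i (by omega), hfA j hcase] at hfij
        exact IsPath.getVert_inj hPAp (by omega) hcase hfij
      · by_cases hcase2 : PA.length ≤ i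
        · rw [hfB i hcase2 (by omega), hfB j (by omega) (by omega)] at hfij
          have := IsPath.getVert_inj hPBp (by omega) (by omega) hfij
          omega
        · exfalso
          rw [hfA i (by omega), hfB j (by omega) (by omega)] at hfij
          have hjB : PB.getVert (PA.length + PB.length - j) ∈ B :=
            hintB _ (by omega) (by omega)
          rcases Nat.eq_zero_or_pos i with rfl | hi
          · rw [Walk.getVert_zero] at hfij
            rw [← hfij] at hjB
            exact hjB.1 hxS
          · have hiA : PA.getVert i ∈ A := hintA i hi (by omega)
            rw [hfij] at hiA
            exact hABdisj _ hiA hjB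
    have hinj : ∀ i j, i < PA.length + PB.length → j < PA.length + PB.length →
        f i = f j → i = j := by
      intro i j hi hj hfij
      rcases le_total i j with h | h
      · exact hone i j h hj hfij
      · exact (hone j i h hi hfij.symm).symm
    have hadjclaim : ∀ i j, i < j → j < PA.length + PB.length →
        (G.Adj (f i) (f j) ↔ (j = i + 1 ∨ (i = 0 ∧ j = PA.length + PB.length - 1))) := by
      intro i j hij hj
      by_cases hcase : j ≤ PA.length
      · rw [hfA i (by omega), hfA j hcase]
        constructor
        · intro hadj
          left
          by_contra hne1
          exact chordA i j (by omega) hcase hadj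
        · rintro (rfl | ⟨rfl, rfl⟩)
          · exact PA.adj_getVert_succ (by omega)
          · exact absurd hcase (by omega)
      · by_cases hcase2 : PA.length ≤ i
        · rw [hfB i hcase2 (by omega), hfB j (by omega) (by omega)]
          constructor
          · intro hadj
            left
            by_contra hne1
            exact chordB (PA.length + PB.length - j) (PA.length + PB.length - i)
              (by omega) (by omega) hadj.symm
          · rintro (rfl | ⟨rfl, rfl⟩)
            · have e : PA.length + PB.length - i = (PA.length + PB.length - (i + 1)) + 1 := by
                omega
              rw [e]
              exact (PB.adj_getVert_succ (by omega)).symm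
            · exact absurd hcase2 (by omega)
        · rw [hfA i (by omega), hfB j (by omega) (by omega)]
          have hjB : PB.getVert (PA.length + PB.length - j) ∈ B :=
            hintB _ (by omega) (by omega)
          rcases Nat.eq_zero_or_pos i with rfl | hi
          · rw [Walk.getVert_zero]
            constructor
            · intro hadj
              right
              refine ⟨rfl, ?_⟩
              by_contra hne1
              have hadj0 : G.Adj (PB.getVert 0) (PB.getVert (PA.length + PB.length - j)) := by
                rw [Walk.getVert_zero]
                exact hadj
              exact chordB 0 _ (by omega) (by omega) hadj0
            · rintro (rfl | ⟨-, rfl⟩)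
              · exact absurd hcase (by omega)
              · have e : PA.length + PB.length - (PA.length + PB.length - 1) = 1 := by omega
                rw [e]
                have h01 := PB.adj_getVert_succ (i := 0) (by omega)
                rwa [Walk.getVert_zero] at h01
          · have hiA : PA.getVert i ∈ A := hintA i hi (by omega)
            constructor
            · intro hadj
              exact absurd hadj (hAB _ hiA _ hjB)
            · intro h
              exfalso
              rcases h with rfl | ⟨rfl, -⟩
              · exact hcase2 (by omega)
              · exact absurd hi (by omega)
    obtain ⟨emb⟩ := cycle_embedding (PA.length + PB.length) hn4 f hinj hadjclaim
    exact (hchordal _ hn4).false emb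
  refine ⟨↑S, ?_, ?_⟩
  · exact fun x hx y hy hne => hclique x (Finset.mem_coe.mp hx) y (Finset.mem_coe.mp hy) hne
  · intro hpre
    have haC : a ∈ ((↑S : Set V))ᶜ := by simpa using haS
    have hbC : b ∈ ((↑S : Set V))ᶜ := by simpa using hbS
    obtain ⟨w⟩ := hpre ⟨a, haC⟩ ⟨b, hbC⟩
    apply hnR
    refine ⟨w.map ⟨Subtype.val, fun {p q} h => h⟩, ?_⟩
    intro v hv
    rw [Walk.support_map, List.mem_map] at hv
    obtain ⟨z, hz, rfl⟩ := hv
    exact z.2
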